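/- Let n ≥ 4 and let C = (c_{ij}) be an n×n matrix over K with every entry nonzero. If Π_{i=1}^n c_{i,w(i)} = 1 for every permutation w ∈ S_n, then c_{ij} = c_{i1}·c_{1j}/c_{11} for all 1 ≤ i, j ≤ n; in particular rank(C) = 1. -/

import Mathlib

open Matrix Finset

/-- for `n ≥ 4`, if all entries of `C` are nonzero and
`Π_i c_{i,w(i)} = 1` for every permutation `w ∈ S_n`, then `c_{ij} = c_{i1}·c_{1j}/c_{11}`
for all `i, j`; in particular `rank C = 1`. -/
theorem rank_one_of_all_perm_products_one {K : Type*} [Field K] [CharZero K]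
    {n : ℕ} (hn : 4 ≤ n) (C : Matrix (Fin n) (Fin n) K)
    (hC : ∀ i j : Fin n, C i j ≠ 0)
    (h : ∀ w : Equiv.Perm (Fin n), ∏ i, C i (w i) = 1) :
    (∀ i j : Fin n, C i j = C i ⟨0, by omega⟩ * C ⟨0, by omega⟩ j / C ⟨0, by omega⟩ ⟨0, by omega⟩) ∧
      C.rank = 1 := by
  set z : Fin n := ⟨0, by omega⟩ with hz
  have key : ∀ i j : Fin n, C i j * C z z = C i z * C z j := by
    intro i j
    rcases eq_or_ne i z with rfl | hi
    · ring
    rcases eq_or_ne j z with rfl | hj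
    · ring
    set w : Equiv.Perm (Fin n) := Equiv.swap i j with hw
    set w' : Equiv.Perm (Fin n) := w * Equiv.swap i z with hw'
    have hwz : w z = z := Equiv.swap_apply_of_ne_of_ne hi.symm hj.symm
    have hwi : w i = j := Equiv.swap_apply_left i j
    have hw'i : w' i = z := by
      simp only [hw', Equiv.Perm.mul_apply, Equiv.swap_apply_left, hwz]
    have hw'z : w' z = j := by
      simp only [hw', Equiv.Perm.mul_apply, Equiv.swap_apply_right, hwi]
    have hsplit : ∀ σ : Equiv.Perm (Fin n),
        ∏ x, C x (σ x) = C i (σ i) * (C z (σ z) *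
          ∏ x ∈ (Finset.univ.erase i).erase z, C x (σ x)) := by
      intro σ
      rw [Finset.mul_prod_erase (Finset.univ.erase i) (fun x => C x (σ x))
          (Finset.mem_erase.mpr ⟨Ne.symm hi, Finset.mem_univ z⟩),
        Finset.mul_prod_erase Finset.univ (fun x => C x (σ x)) (Finset.mem_univ i)]
    have hPeq : ∏ x ∈ (Finset.univ.erase i).erase z, C x (w' x)
        = ∏ x ∈ (Finset.univ.erase i).erase z, C x (w x) := by
      refine Finset.prod_congr rfl fun x hx => ?_
      simp only [Finset.mem_erase] at hx
      have : w' x = w x := by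
        simp only [hw', Equiv.Perm.mul_apply,
          Equiv.swap_apply_of_ne_of_ne hx.2.1 hx.1]
      rw [this]
    have hP : ∏ x ∈ (Finset.univ.erase i).erase z, C x (w x) ≠ 0 :=
      Finset.prod_ne_zero_iff.mpr fun x _ => hC _ _
    have h1 := h w
    have h2 := h w'
    rw [hsplit w, hwi, hwz] at h1
    rw [hsplit w', hw'i, hw'z, hPeq] at h2
    have heq := h1.trans h2.symm
    rw [← mul_assoc, ← mul_assoc] at heq
    exact mul_right_cancel₀ hP heq
  have hform : ∀ i j : Fin n, C i j = C i z * C z j / C z z := by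
    intro i j
    rw [eq_div_iff (hC z z)]
    exact key i j
  refine ⟨hform, ?_⟩
  have hle : C.rank ≤ 1 := by
    have hCeq : C = Matrix.replicateCol Unit (fun i => C i z) *
        Matrix.replicateRow Unit (fun j => C z j / C z z) := by
      rw [← Matrix.vecMulVec_eq Unit]
      ext i j
      simp only [Matrix.vecMulVec_apply]
      rw [hform i j, mul_div_assoc]
    have h1 := Matrix.rank_mul_le_left (Matrix.replicateCol Unit (fun i => C i z))
      (Matrix.replicateRow Unit (fun j => C z j / C z z))
    rw [← hCeq] at h1
    have h2 := Matrix.rank_le_card_width (Matrix.replicateCol Unit (fun i => C i z))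
    simp only [Fintype.card_unit] at h2
    omega
  have hge : 1 ≤ C.rank := by
    rw [Nat.one_le_iff_ne_zero]
    intro h0
    have : C *ᵥ Pi.single z 1 = 0 := by
      have hmem : C *ᵥ Pi.single z 1 ∈ LinearMap.range C.mulVecLin :=
        ⟨Pi.single z 1, rfl⟩
      have hr : Module.finrank K (LinearMap.range C.mulVecLin) = 0 := h0
      rw [Submodule.finrank_eq_zero] at hr
      rw [hr, Submodule.mem_bot] at hmem
      exact hmem
    have := congrFun this z
    simp only [Matrix.mulVec_single_one, Pi.zero_apply, mul_one] at this
    exact hC z z this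
  omega
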